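/- Under assumption (A1), for every almost surely finite (F_t)-stopping time S one has E(N_S) ≤ (Id−K)^{-1} μ · E(S) componentwise, where (Id−K)^{-1}μ is identified with a column vector in ℝ^d. -/

import Mathlib

open MeasureTheory Set Filter Topology

noncomputable section

/-- The data of a `d`-dimensional counting process `N` (with right-continuous,
nondecreasing, `ℕ`-valued paths started at `0`, all jumps of size one and no two
components jumping at the same time), adapted to a filtration `F`, together with
baseline intensities `μ` and nonnegative measurable excitation kernels `φ`. -/
structure HawkesData (d : ℕ) (Ω : Type*) [mΩ : MeasurableSpace Ω] where
  P : Measure Ω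
  isProb : IsProbabilityMeasure P
  F : Filtration ℝ mΩ
  μ : Fin d → ℝ
  μ_nonneg : ∀ i, 0 ≤ μ i
  φ : Fin d → Fin d → ℝ → ℝ
  φ_meas : ∀ i j, Measurable (φ i j)
  φ_nonneg : ∀ i j t, 0 ≤ φ i j t
  /-- the paths, as right-continuous nondecreasing functions -/
  N : Fin d → Ω → StieltjesFunction ℝ
  N_zero : ∀ i ω, ∀ t ≤ (0 : ℝ), N i ω t = 0
  N_nat : ∀ i ω t, ∃ n : ℕ, N i ω t = n
  jump_le_one : ∀ i ω t, (N i ω).measure {t} ≤ 1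
  no_common_jump : ∀ i j ω t, i ≠ j → (N i ω).measure {t} = 0 ∨ (N j ω).measure {t} = 0
  adapted : ∀ i, Adapted F fun t ω => N i ω t

namespace HawkesData

variable {d : ℕ} {Ω : Type*} [mΩ : MeasurableSpace Ω]

/-- The Hawkes stochastic intensity `λ_{i,t} = μ_i + Σ_j ∫_{(0,t)} φ_{ij}(t-s) dN_{j,s}`. -/
def lam (H : HawkesData d Ω) (i : Fin d) (t : ℝ) (ω : Ω) : ℝ :=
  H.μ i + ∑ j, ∫ s in Ioo (0 : ℝ) t, H.φ i j (t - s) ∂(H.N j ω).measure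

/-- The compensated process `M_{i,t} = N_{i,t} - ∫_0^t λ_{i,s} ds`. -/
def M (H : HawkesData d Ω) (i : Fin d) (t : ℝ) (ω : Ω) : ℝ :=
  H.N i ω t - ∫ s in Ioc (0 : ℝ) t, H.lam i s ω

/-- `N` is a Hawkes process with parameters `(μ, φ)` when each compensated
coordinate is a martingale. -/
def IsHawkes (H : HawkesData d Ω) : Prop := ∀ i, Martingale (H.M i) H.F H.P

/-- The matrix `K = ∫_0^∞ φ(t) dt`. -/
def K (H : HawkesData d Ω) : Matrix (Fin d) (Fin d) ℝ :=
  Matrix.of fun i j => ∫ t in Ioi (0 : ℝ), H.φ i j t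

/-- Assumption (A1): the kernels are integrable and the spectral radius of `K`
is strictly less than one. -/
def A1 (H : HawkesData d Ω) : Prop :=
  (∀ i j, IntegrableOn (H.φ i j) (Ioi 0)) ∧
    spectralRadius ℂ ((H.K).map fun x : ℝ => (x : ℂ)) < 1

/-- `H.phiIter n` is the `(n+1)`-fold convolution `φ_{n+1}` of the kernel matrix. -/
def phiIter (H : HawkesData d Ω) : ℕ → Fin d → Fin d → ℝ → ℝ
  | 0 => H.φ
  | n + 1 => fun i j t => ∑ k, ∫ s in Ioc (0 : ℝ) t, H.φ i k (t - s) * H.phiIter n k j s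

/-- `ψ = Σ_{n ≥ 1} φ_n`. -/
def psi (H : HawkesData d Ω) (i j : Fin d) (t : ℝ) : ℝ := ∑' n, H.phiIter n i j t

/-- The expectation `E(N_{i,t})`. -/
def ENt (H : HawkesData d Ω) (i : Fin d) (t : ℝ) : ℝ := ∫ ω, H.N i ω t ∂H.P

/-- `Γ = (Id - K)⁻¹`. -/
def Gam (H : HawkesData d Ω) : Matrix (Fin d) (Fin d) ℝ := (1 - H.K)⁻¹

/-- The diagonal matrix `Σ` with `Σ_{ii} = ((Id - K)⁻¹ μ)_i`. -/
def Sig (H : HawkesData d Ω) : Matrix (Fin d) (Fin d) ℝ :=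
  Matrix.diagonal fun i => H.Gam.mulVec H.μ i

end HawkesData


namespace HawkesAux

attribute [local instance] Matrix.linftyOpNormedRing Matrix.linftyOpNormedAlgebra


variable {d : ℕ}

theorem entry_norm_le (B : Matrix (Fin d) (Fin d) ℂ) (i j : Fin d) : ‖B i j‖ ≤ ‖B‖ := by
  have h1 : ‖B i j‖₊ ≤ ∑ j' : Fin d, ‖B i j'‖₊ :=
    Finset.single_le_sum (f := fun j' => ‖B i j'‖₊) (fun _ _ => zero_le) (Finset.mem_univ j)
  have h2 : (∑ j' : Fin d, ‖B i j'‖₊) ≤ Finset.univ.sup fun i : Fin d => ∑ j' : Fin d, ‖B i j'‖₊ :=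
    Finset.le_sup (f := fun i : Fin d => ∑ j' : Fin d, ‖B i j'‖₊) (Finset.mem_univ i)
  have := h1.trans h2
  rw [← Matrix.linfty_opNNNorm_def] at this
  exact_mod_cast this

theorem matrix_pow_entry_tendsto_zero (K : Matrix (Fin d) (Fin d) ℝ)
    (hρ : spectralRadius ℂ (K.map (fun x : ℝ => (x : ℂ))) < 1) (i j : Fin d) :
    Tendsto (fun n => (K ^ n) i j) atTop (𝓝 0) := by
  set A : Matrix (Fin d) (Fin d) ℂ := K.map (fun x : ℝ => (x : ℂ)) with hA
  have hρtop : spectralRadius ℂ A ≠ ⊤ := (hρ.trans ENNReal.one_lt_top).ne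
  have h1 : (spectralRadius ℂ A).toReal < 1 := by
    rw [← ENNReal.toReal_one]
    exact ENNReal.toReal_strict_mono ENNReal.one_ne_top hρ
  have h0 : 0 ≤ (spectralRadius ℂ A).toReal := ENNReal.toReal_nonneg
  set r : ℝ := ((spectralRadius ℂ A).toReal + 1) / 2 with hr
  have hr0 : 0 < r := by positivity
  have hr1 : r < 1 := by rw [hr]; linarith
  have hρr : spectralRadius ℂ A < ENNReal.ofReal r := by
    rw [ENNReal.lt_ofReal_iff_toReal_lt hρtop, hr]; linarith
  have hgel := spectrum.pow_norm_pow_one_div_tendsto_nhds_spectralRadius A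
  have hev : ∀ᶠ n : ℕ in atTop, ENNReal.ofReal (‖A ^ n‖ ^ (1 / (n : ℝ))) < ENNReal.ofReal r :=
    hgel.eventually_lt_const hρr
  have hentry : ∀ n : ℕ, |(K ^ n) i j| ≤ ‖A ^ n‖ := by
    intro n
    have hmap : A ^ n = (K ^ n).map (fun x : ℝ => (x : ℂ)) := by
      have : A = Complex.ofRealHom.mapMatrix K := rfl
      rw [this, ← map_pow]
      rfl
    have : ‖(A ^ n) i j‖ ≤ ‖A ^ n‖ := entry_norm_le _ i j
    rw [hmap]
    rwa [hmap, Matrix.map_apply, Complex.norm_real, Real.norm_eq_abs] at this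
  refine squeeze_zero_norm' (a := fun n => r ^ n) ?_ ?_
  · filter_upwards [hev, eventually_ge_atTop 1] with n hn hn1
    have hnorm_nonneg : (0:ℝ) ≤ ‖A ^ n‖ := norm_nonneg _
    have hlt : ‖A ^ n‖ ^ (1 / (n : ℝ)) < r := by
      rwa [ENNReal.ofReal_lt_ofReal_iff hr0] at hn
    have hnpos : (0:ℝ) < n := by exact_mod_cast hn1
    have : (‖A ^ n‖ ^ (1 / (n : ℝ))) ^ (n : ℝ) < r ^ (n : ℝ) :=
      Real.rpow_lt_rpow (Real.rpow_nonneg hnorm_nonneg _) hlt hnpos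
    rw [← Real.rpow_mul hnorm_nonneg, one_div, inv_mul_cancel₀ hnpos.ne', Real.rpow_one,
      Real.rpow_natCast] at this
    exact (Real.norm_eq_abs _ ▸ (hentry n)).trans this.le
  · exact tendsto_pow_atTop_nhds_zero_of_lt_one hr0.le hr1


theorem one_sub_det_isUnit (K : Matrix (Fin d) (Fin d) ℝ)
    (hρ : spectralRadius ℂ (K.map (fun x : ℝ => (x : ℂ))) < 1) : IsUnit (1 - K).det := by
  set A : Matrix (Fin d) (Fin d) ℂ := K.map (fun x : ℝ => (x : ℂ)) with hA
  have h1 : (1 : ℂ) ∈ resolventSet ℂ A := by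
    apply spectrum.mem_resolventSet_of_spectralRadius_lt
    simpa using hρ
  rw [spectrum.mem_resolventSet_iff] at h1
  have h2 : IsUnit (1 - A) := by simpa using h1
  have h3 : (1 - A) = (1 - K).map (fun x : ℝ => (x : ℂ)) := by
    have : (1 - A) = Complex.ofRealHom.mapMatrix (1 - K) := by
      rw [map_sub, map_one]; rfl
    rw [this]; rfl
  rw [Matrix.isUnit_iff_isUnit_det, h3] at h2
  have h4 : ((1 - K).map fun x : ℝ => (x : ℂ)).det = (((1 - K).det : ℝ) : ℂ) :=
    (RingHom.map_det Complex.ofRealHom (1 - K)).symm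
  rw [h4] at h2
  rw [isUnit_iff_ne_zero]
  intro h0
  rw [h0] at h2
  simp at h2

theorem pow_entry_nonneg (K : Matrix (Fin d) (Fin d) ℝ) (hK : ∀ i j, 0 ≤ K i j) :
    ∀ (n : ℕ) (i j : Fin d), 0 ≤ (K ^ n) i j := by
  intro n
  induction n with
  | zero => intro i j; simp [Matrix.one_apply]; split <;> norm_num
  | succ n ih =>
      intro i j
      rw [pow_succ, Matrix.mul_apply]
      exact Finset.sum_nonneg fun l _ => mul_nonneg (ih i l) (hK l j)

theorem geom_sum_tendsto_inv (K : Matrix (Fin d) (Fin d) ℝ)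
    (hρ : spectralRadius ℂ (K.map (fun x : ℝ => (x : ℂ))) < 1) (i j : Fin d) :
    Tendsto (fun n => (∑ k ∈ Finset.range n, K ^ k) i j) atTop (𝓝 ((1 - K)⁻¹ i j)) := by
  have hdet := one_sub_det_isUnit K hρ
  have hgeo : ∀ n : ℕ, (∑ k ∈ Finset.range n, K ^ k) = (1 - K ^ n) * (1 - K)⁻¹ := by
    intro n
    have h := geom_sum_mul K n
    have h1 : (∑ k ∈ Finset.range n, K ^ k) * (1 - K) = 1 - K ^ n := by
      calc (∑ k ∈ Finset.range n, K ^ k) * (1 - K)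
          = -((∑ k ∈ Finset.range n, K ^ k) * (K - 1)) := by rw [← Matrix.mul_neg, neg_sub]
        _ = -(K ^ n - 1) := by rw [h]
        _ = 1 - K ^ n := by rw [neg_sub]
    calc (∑ k ∈ Finset.range n, K ^ k)
        = (∑ k ∈ Finset.range n, K ^ k) * ((1 - K) * (1 - K)⁻¹) := by
          rw [Matrix.mul_nonsing_inv _ hdet, Matrix.mul_one]
      _ = ((∑ k ∈ Finset.range n, K ^ k) * (1 - K)) * (1 - K)⁻¹ := by rw [Matrix.mul_assoc]
      _ = (1 - K ^ n) * (1 - K)⁻¹ := by rw [h1]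
  have hentry : ∀ n : ℕ, (∑ k ∈ Finset.range n, K ^ k) i j
      = ∑ l, ((1 : Matrix (Fin d) (Fin d) ℝ) i l - (K ^ n) i l) * (1 - K)⁻¹ l j := by
    intro n
    rw [hgeo n, Matrix.mul_apply]
    congr 1
  simp_rw [hentry]
  have hlim : ∀ l : Fin d, Tendsto
      (fun n => ((1 : Matrix (Fin d) (Fin d) ℝ) i l - (K ^ n) i l) * (1 - K)⁻¹ l j) atTop
      (𝓝 (((1 : Matrix (Fin d) (Fin d) ℝ) i l) * (1 - K)⁻¹ l j)) := by
    intro l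
    have := (tendsto_const_nhds (x := (1 : Matrix (Fin d) (Fin d) ℝ) i l)
      (f := atTop (α := ℕ))).sub (matrix_pow_entry_tendsto_zero K hρ i l)
    rw [sub_zero] at this
    exact this.mul_const _
  have := tendsto_finset_sum Finset.univ (fun l _ => hlim l)
  convert this using 2
  rw [← Matrix.mul_apply, Matrix.one_mul]

theorem inv_one_sub_entry_nonneg (K : Matrix (Fin d) (Fin d) ℝ) (hK : ∀ i j, 0 ≤ K i j)
    (hρ : spectralRadius ℂ (K.map (fun x : ℝ => (x : ℂ))) < 1) (i j : Fin d) :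
    0 ≤ (1 - K)⁻¹ i j := by
  refine ge_of_tendsto' (geom_sum_tendsto_inv K hρ i j) fun n => ?_
  rw [Matrix.sum_apply]
  exact Finset.sum_nonneg fun k _ => pow_entry_nonneg K hK k i j

theorem le_inv_one_sub_mulVec (K : Matrix (Fin d) (Fin d) ℝ) (hK : ∀ i j, 0 ≤ K i j)
    (hρ : spectralRadius ℂ (K.map (fun x : ℝ => (x : ℂ))) < 1) {x a : Fin d → ℝ}
    (h : ∀ i, x i ≤ a i + K.mulVec x i) :
    ∀ i, x i ≤ (1 - K)⁻¹.mulVec a i := by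
  have key : ∀ (n : ℕ) (i : Fin d),
      x i ≤ (∑ k ∈ Finset.range n, K ^ k).mulVec a i + (K ^ n).mulVec x i := by
    intro n
    induction n with
    | zero =>
        intro i
        simp [Matrix.mulVec, dotProduct, Matrix.one_apply]
    | succ n ih =>
        intro i
        have step : (K ^ n).mulVec x i ≤ (K ^ n).mulVec a i + (K ^ (n + 1)).mulVec x i := by
          have h1 : (K ^ n).mulVec x i ≤ (K ^ n).mulVec (fun j => a j + K.mulVec x j) i := by
            unfold Matrix.mulVec dotProduct
            exact Finset.sum_le_sum fun l _ =>
              mul_le_mul_of_nonneg_left (h l) (pow_entry_nonneg K hK n i l)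
          have h2 : (K ^ n).mulVec (fun j => a j + K.mulVec x j) i
              = (K ^ n).mulVec a i + (K ^ (n + 1)).mulVec x i := by
            have : (K ^ (n + 1)).mulVec x = (K ^ n).mulVec (K.mulVec x) := by
              rw [Matrix.mulVec_mulVec, ← pow_succ]
            rw [this]
            unfold Matrix.mulVec dotProduct
            simp [mul_add, Finset.sum_add_distrib]
          rw [h2] at h1
          exact h1
        calc x i ≤ (∑ k ∈ Finset.range n, K ^ k).mulVec a i + (K ^ n).mulVec x i := ih i
          _ ≤ (∑ k ∈ Finset.range n, K ^ k).mulVec a i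
              + ((K ^ n).mulVec a i + (K ^ (n + 1)).mulVec x i) := by linarith [step]
          _ = (∑ k ∈ Finset.range (n + 1), K ^ k).mulVec a i + (K ^ (n + 1)).mulVec x i := by
              rw [Finset.sum_range_succ]
              unfold Matrix.mulVec dotProduct
              simp [Matrix.add_apply, add_mul, Finset.sum_add_distrib]
              ring
  intro i
  have hlim1 : Tendsto (fun n => (∑ k ∈ Finset.range n, K ^ k).mulVec a i) atTop
      (𝓝 ((1 - K)⁻¹.mulVec a i)) := by
    unfold Matrix.mulVec dotProduct
    exact tendsto_finset_sum _ fun l _ => (geom_sum_tendsto_inv K hρ i l).mul_const _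
  have hlim2 : Tendsto (fun n => (K ^ n).mulVec x i) atTop (𝓝 0) := by
    have : Tendsto (fun n => ∑ l, (K ^ n) i l * x l) atTop (𝓝 (∑ l : Fin d, 0 * x l)) :=
      tendsto_finset_sum _ fun l _ => (matrix_pow_entry_tendsto_zero K hρ i l).mul_const _
    simpa [Matrix.mulVec, dotProduct] using this
  have := hlim1.add hlim2
  rw [add_zero] at this
  exact ge_of_tendsto' this fun n => key n i



variable {α : Type*} [MeasurableSpace α]

/-- If two nonnegative measurable functions differ by an integrable function of zero mean,
their lintegrals agree. -/
theorem lintegral_ofReal_eq_of_sub_integrable (P : Measure α)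
    {f g : α → ℝ} (hf : ∀ x, 0 ≤ f x) (hg : ∀ x, 0 ≤ g x)
    (hfm : Measurable f) (hgm : Measurable g)
    (hint : Integrable (fun x => f x - g x) P) (hzero : ∫ x, (f x - g x) ∂P = 0) :
    ∫⁻ x, ENNReal.ofReal (f x) ∂P = ∫⁻ x, ENNReal.ofReal (g x) ∂P := by
  have habs : ∫⁻ x, ENNReal.ofReal |f x - g x| ∂P < ⊤ := by
    have := hint.2
    rw [hasFiniteIntegral_iff_norm] at this
    simpa [Real.norm_eq_abs] using this
  have hb1 : ∫⁻ x, ENNReal.ofReal (f x) ∂P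
      ≤ ∫⁻ x, ENNReal.ofReal (g x) ∂P + ∫⁻ x, ENNReal.ofReal |f x - g x| ∂P := by
    rw [← lintegral_add_right _ (show Measurable fun x => ENNReal.ofReal |f x - g x| from
      (hfm.sub hgm).abs.ennreal_ofReal)]
    apply lintegral_mono fun x => ?_
    rw [← ENNReal.ofReal_add (hg x) (abs_nonneg _)]
    exact ENNReal.ofReal_le_ofReal (by cases abs_cases (f x - g x) <;> linarith)
  have hb2 : ∫⁻ x, ENNReal.ofReal (g x) ∂P
      ≤ ∫⁻ x, ENNReal.ofReal (f x) ∂P + ∫⁻ x, ENNReal.ofReal |f x - g x| ∂P := by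
    rw [← lintegral_add_right _ (show Measurable fun x => ENNReal.ofReal |f x - g x| from
      (hfm.sub hgm).abs.ennreal_ofReal)]
    apply lintegral_mono fun x => ?_
    rw [← ENNReal.ofReal_add (hf x) (abs_nonneg _)]
    exact ENNReal.ofReal_le_ofReal (by cases abs_cases (f x - g x) <;> linarith)
  rcases eq_top_or_lt_top (∫⁻ x, ENNReal.ofReal (g x) ∂P) with htop | hlt
  · rw [htop, eq_top_iff]
    by_contra hcon
    push_neg at hcon
    have := hb2.trans_lt (ENNReal.add_lt_top.2 ⟨hcon, habs⟩)
    exact this.ne htop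
  · have hftop : ∫⁻ x, ENNReal.ofReal (f x) ∂P < ⊤ :=
      hb1.trans_lt (ENNReal.add_lt_top.2 ⟨hlt, habs⟩)
    have hfi : Integrable f P := by
      refine ⟨hfm.aestronglyMeasurable, ?_⟩
      rw [hasFiniteIntegral_iff_ofReal (Eventually.of_forall hf)]
      exact hftop
    have hgi : Integrable g P := by
      refine ⟨hgm.aestronglyMeasurable, ?_⟩
      rw [hasFiniteIntegral_iff_ofReal (Eventually.of_forall hg)]
      exact hlt
    have hint2 : ∫ x, (f x - g x) ∂P = (∫ x, f x ∂P) - ∫ x, g x ∂P := integral_sub hfi hgi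
    have heq : ∫ x, f x ∂P = ∫ x, g x ∂P := by rw [hint2] at hzero; linarith
    rw [← ofReal_integral_eq_lintegral_ofReal hfi (Eventually.of_forall hf),
      ← ofReal_integral_eq_lintegral_ofReal hgi (Eventually.of_forall hg), heq]

/-- Composition with a countably-valued measurable time is measurable. -/
theorem measurable_comp_countable_range {g : ℝ → α → ℝ}
    (hg : ∀ t, Measurable (g t)) {τ : α → ℝ} (hτ : Measurable τ) {D : Set ℝ} (hD : D.Countable)
    (hrange : ∀ x, τ x ∈ D) : Measurable fun x => g (τ x) x := by
  intro s hs
  have : (fun x => g (τ x) x) ⁻¹' s = ⋃ t ∈ D, ({x | τ x = t} ∩ g t ⁻¹' s) := by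
    ext x
    simp only [mem_preimage, mem_iUnion, mem_inter_iff, mem_setOf_eq]
    constructor
    · intro hx
      exact ⟨τ x, hrange x, rfl, hx⟩
    · rintro ⟨t, _, rfl, hx⟩
      exact hx
  rw [this]
  exact MeasurableSet.biUnion hD fun t _ =>
    (hτ (measurableSet_singleton t)).inter (hg t hs)


end HawkesAux

namespace HawkesData

open scoped ENNReal

open HawkesAux

variable {d : ℕ} {Ω : Type*} [mΩ : MeasurableSpace Ω]

section Pathwise
variable (H : HawkesData d Ω)

theorem N_nonneg (i : Fin d) (ω : Ω) (t : ℝ) : 0 ≤ H.N i ω t := by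
  rcases le_or_gt t 0 with h | h
  · rw [H.N_zero i ω t h]
  · rw [← H.N_zero i ω 0 le_rfl]
    exact (H.N i ω).mono h.le

theorem measure_Ioc_N (j : Fin d) (ω : Ω) (b : ℝ) :
    (H.N j ω).measure (Ioc 0 b) = ENNReal.ofReal (H.N j ω b) := by
  rw [StieltjesFunction.measure_Ioc, H.N_zero j ω 0 le_rfl, sub_zero]

theorem lam_nonneg (i : Fin d) (t : ℝ) (ω : Ω) : 0 ≤ H.lam i t ω := by
  refine add_nonneg (H.μ_nonneg i) (Finset.sum_nonneg fun j _ => ?_)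
  exact integral_nonneg fun s => H.φ_nonneg i j _

theorem K_nonneg (i j : Fin d) : 0 ≤ H.K i j :=
  integral_nonneg fun t => H.φ_nonneg i j t

theorem lintegral_phi_eq (hA1 : H.A1) (i j : Fin d) :
    ∫⁻ t in Ioi (0 : ℝ), ENNReal.ofReal (H.φ i j t) = ENNReal.ofReal (H.K i j) :=
  (ofReal_integral_eq_lintegral_ofReal (hA1.1 i j)
    (Eventually.of_forall fun t => H.φ_nonneg i j t)).symm

/-- The kernel `(s, u) ↦ 1_{0 < u < s} φ_{ij}(s - u)` as an `ℝ≥0∞`-valued function. -/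
def Fk (i j : Fin d) : ℝ × ℝ → ℝ≥0∞ := fun p =>
  if 0 < p.2 ∧ p.2 < p.1 then ENNReal.ofReal (H.φ i j (p.1 - p.2)) else 0

theorem Fk_measurable (i j : Fin d) : Measurable (H.Fk i j) := by
  refine Measurable.ite ?_ ?_ measurable_const
  · exact (measurableSet_lt measurable_const measurable_snd).inter
      (measurableSet_lt measurable_snd measurable_fst)
  · exact ((H.φ_meas i j).comp (measurable_fst.sub measurable_snd)).ennreal_ofReal

theorem lintegral_Fk_eq (i j : Fin d) (ω : Ω) (s : ℝ) :
    ∫⁻ u in Ioo 0 s, ENNReal.ofReal (H.φ i j (s - u)) ∂(H.N j ω).measure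
      = ∫⁻ u, H.Fk i j (s, u) ∂(H.N j ω).measure := by
  rw [← lintegral_indicator measurableSet_Ioo]
  congr 1
  ext u
  by_cases hu : u ∈ Ioo 0 s
  · rw [indicator_of_mem hu]
    simp only [Fk, mem_Ioo] at hu ⊢
    rw [if_pos hu]
  · rw [indicator_of_notMem hu]
    simp only [Fk, mem_Ioo] at hu ⊢
    rw [if_neg hu]

theorem measurable_lintegral_Fk (i j : Fin d) (ω : Ω) :
    Measurable fun s => ∫⁻ u, H.Fk i j (s, u) ∂(H.N j ω).measure :=
  (Fk_measurable H i j).lintegral_prod_right'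

/-- Inner bound after Tonelli: the `s`-integral of the kernel is at most `K i j` on `(0,b)`. -/
theorem inner_lintegral_le (hA1 : H.A1) (i j : Fin d) (b : ℝ) (u : ℝ) :
    ∫⁻ s in Ioc 0 b, H.Fk i j (s, u) ≤ (Ioo (0:ℝ) b).indicator
      (fun _ => ENNReal.ofReal (H.K i j)) u := by
  by_cases hu : u ∈ Ioo (0:ℝ) b
  · have h1 : ∀ s ∈ Ioc (0:ℝ) b, H.Fk i j (s, u)
        = (Ioc u b).indicator (fun s => ENNReal.ofReal (H.φ i j (s - u))) s := by
      intro s hs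
      obtain ⟨hu0, hub⟩ := mem_Ioo.1 hu
      rcases mem_Ioc.1 hs with ⟨hs0, hsb⟩
      by_cases hus : u < s
      · rw [indicator_of_mem (mem_Ioc.2 ⟨hus, hsb⟩)]
        simp only [Fk]
        rw [if_pos ⟨hu0, hus⟩]
      · rw [indicator_of_notMem (fun hmem => hus (mem_Ioc.1 hmem).1)]
        simp only [Fk]
        rw [if_neg (by tauto)]
    rw [setLIntegral_congr_fun measurableSet_Ioc h1,
      lintegral_indicator measurableSet_Ioc, Measure.restrict_restrict measurableSet_Ioc]
    have hss : Ioc u b ∩ Ioc 0 b = Ioc u b := by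
      rw [inter_eq_left]
      exact fun x hx => ⟨lt_trans hu.1 hx.1, hx.2⟩
    rw [hss, indicator_of_mem hu]
    have htrans : ∫⁻ s in Ioc u b, ENNReal.ofReal (H.φ i j (s - u))
        = ∫⁻ s in Ioc 0 (b - u), ENNReal.ofReal (H.φ i j s) := by
      have hmp : MeasurePreserving (fun x : ℝ => x + u) volume volume :=
        measurePreserving_add_right volume u
      have hemb : MeasurableEmbedding (fun x : ℝ => x + u) :=
        (Homeomorph.addRight u).measurableEmbedding
      have himg : (fun x : ℝ => x + u) '' (Ioc 0 (b - u)) = Ioc u b := by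
        ext x
        simp only [mem_image, mem_Ioc]
        constructor
        · rintro ⟨y, ⟨h1, h2⟩, rfl⟩; constructor <;> linarith
        · rintro ⟨h1, h2⟩; exact ⟨x - u, ⟨by linarith, by linarith⟩, by ring⟩
      have hcomp := hmp.setLIntegral_comp_emb hemb
        (fun s => ENNReal.ofReal (H.φ i j (s - u))) (Ioc 0 (b - u))
      rw [himg] at hcomp
      rw [← hcomp]
      refine setLIntegral_congr_fun measurableSet_Ioc (fun x _ => ?_)
      rw [add_sub_cancel_right]
    rw [htrans]
    rw [← lintegral_phi_eq H hA1 i j]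
    exact lintegral_mono' (Measure.restrict_mono Ioc_subset_Ioi_self le_rfl) le_rfl
  · rw [indicator_of_notMem hu]
    have h0 : ∀ s ∈ Ioc (0:ℝ) b, H.Fk i j (s, u) = 0 := by
      intro s hs
      simp only [Fk]
      rw [if_neg]
      rintro ⟨h1, h2⟩
      exact hu ⟨h1, lt_of_lt_of_le h2 hs.2⟩
    rw [setLIntegral_congr_fun measurableSet_Ioc h0, lintegral_zero]

/-- The pathwise lintegral bound on the intensity. -/
theorem lintegral_lam_le (hA1 : H.A1) (i : Fin d) (ω : Ω) (b : ℝ) :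
    ∫⁻ s in Ioc 0 b, ENNReal.ofReal (H.lam i s ω)
      ≤ ENNReal.ofReal (H.μ i) * ENNReal.ofReal b
        + ∑ j, ENNReal.ofReal (H.K i j) * ENNReal.ofReal (H.N j ω b) := by
  rcases le_or_gt b 0 with hb | hb
  · rw [Ioc_eq_empty (by exact not_lt.2 hb)]
    simp
  have step1 : ∀ s : ℝ, ENNReal.ofReal (H.lam i s ω)
      ≤ ENNReal.ofReal (H.μ i) + ∑ j, ∫⁻ u, H.Fk i j (s, u) ∂(H.N j ω).measure := by
    intro s
    have hsum0 : 0 ≤ ∑ j, ∫ u in Ioo (0:ℝ) s, H.φ i j (s - u) ∂(H.N j ω).measure :=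
      Finset.sum_nonneg fun j _ => integral_nonneg fun u => H.φ_nonneg i j _
    rw [HawkesData.lam, ENNReal.ofReal_add (H.μ_nonneg i) hsum0]
    refine add_le_add le_rfl ?_
    rw [ENNReal.ofReal_sum_of_nonneg fun j _ => integral_nonneg fun u => H.φ_nonneg i j _]
    refine Finset.sum_le_sum fun j _ => ?_
    rw [← lintegral_Fk_eq]
    by_cases hI : IntegrableOn (fun u => H.φ i j (s - u)) (Ioo 0 s) (H.N j ω).measure
    · rw [ofReal_integral_eq_lintegral_ofReal hI
        (Eventually.of_forall fun u => H.φ_nonneg i j _)]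
    · rw [integral_undef hI]
      simp
  calc ∫⁻ s in Ioc 0 b, ENNReal.ofReal (H.lam i s ω)
      ≤ ∫⁻ s in Ioc 0 b, (ENNReal.ofReal (H.μ i)
          + ∑ j, ∫⁻ u, H.Fk i j (s, u) ∂(H.N j ω).measure) := lintegral_mono step1
    _ = ENNReal.ofReal (H.μ i) * ENNReal.ofReal b
          + ∑ j, ∫⁻ s in Ioc 0 b, ∫⁻ u, H.Fk i j (s, u) ∂(H.N j ω).measure := by
        rw [lintegral_add_left measurable_const, lintegral_const,
          lintegral_finset_sum _ fun j _ => measurable_lintegral_Fk H i j ω]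
        congr 1
        rw [Measure.restrict_apply_univ, Real.volume_Ioc, sub_zero]
    _ ≤ ENNReal.ofReal (H.μ i) * ENNReal.ofReal b
          + ∑ j, ENNReal.ofReal (H.K i j) * ENNReal.ofReal (H.N j ω b) := by
        refine add_le_add le_rfl (Finset.sum_le_sum fun j _ => ?_)
        have huncur : Function.uncurry (fun s u => H.Fk i j (s, u)) = H.Fk i j := rfl
        have hswap := lintegral_lintegral_swap (μ := volume.restrict (Ioc 0 b))
          (ν := (H.N j ω).measure) (f := fun s u => H.Fk i j (s, u))
          (by rw [huncur]; exact (Fk_measurable H i j).aemeasurable)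
        refine le_of_eq hswap |>.trans ?_
        calc ∫⁻ u, (∫⁻ s in Ioc 0 b, H.Fk i j (s, u)) ∂(H.N j ω).measure
            ≤ ∫⁻ u, (Ioo (0:ℝ) b).indicator (fun _ => ENNReal.ofReal (H.K i j)) u
                ∂(H.N j ω).measure := lintegral_mono (inner_lintegral_le H hA1 i j b)
          _ = ENNReal.ofReal (H.K i j) * (H.N j ω).measure (Ioo 0 b) := by
              rw [lintegral_indicator measurableSet_Ioo, setLIntegral_const, mul_comm]
          _ ≤ ENNReal.ofReal (H.K i j) * ENNReal.ofReal (H.N j ω b) := by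
              refine mul_le_mul_right ?_ _
              rw [← measure_Ioc_N H j ω b]
              exact measure_mono Ioo_subset_Ioc_self

theorem measurable_lam_s (i : Fin d) (ω : Ω) : Measurable fun s => H.lam i s ω := by
  have h : ∀ j : Fin d, StronglyMeasurable fun p : ℝ × ℝ =>
      ({p : ℝ × ℝ | 0 < p.2 ∧ p.2 < p.1}).indicator (fun p => H.φ i j (p.1 - p.2)) p := by
    intro j
    refine Measurable.stronglyMeasurable (Measurable.indicator ?_ ?_)
    · exact (H.φ_meas i j).comp (measurable_fst.sub measurable_snd)
    · exact (measurableSet_lt measurable_const measurable_snd).inter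
        (measurableSet_lt measurable_snd measurable_fst)
  have hmj : ∀ j : Fin d, Measurable fun s =>
      ∫ u in Ioo (0:ℝ) s, H.φ i j (s - u) ∂(H.N j ω).measure := by
    intro j
    have hsm := (h j).integral_prod_right'  (ν := (H.N j ω).measure)
    have heq : ∀ s : ℝ, ∫ u in Ioo (0:ℝ) s, H.φ i j (s - u) ∂(H.N j ω).measure
        = ∫ u, ({p : ℝ × ℝ | 0 < p.2 ∧ p.2 < p.1}).indicator
            (fun p => H.φ i j (p.1 - p.2)) (s, u) ∂(H.N j ω).measure := by
      intro s
      rw [← integral_indicator measurableSet_Ioo]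
      refine integral_congr_ae (Eventually.of_forall fun u => ?_)
      simp only [Set.indicator_apply, mem_Ioo, mem_setOf_eq]
    simpa [← heq] using hsm.measurable
  exact measurable_const.add (Finset.measurable_sum _ fun j _ => hmj j)

theorem integrableOn_lam (hA1 : H.A1) (i : Fin d) (ω : Ω) (b : ℝ) :
    IntegrableOn (fun s => H.lam i s ω) (Ioc 0 b) := by
  refine ⟨(measurable_lam_s H i ω).aestronglyMeasurable, ?_⟩
  rw [hasFiniteIntegral_iff_ofReal (Eventually.of_forall fun s => lam_nonneg H i s ω)]
  refine lt_of_le_of_lt (lintegral_lam_le H hA1 i ω b) ?_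
  refine ENNReal.add_lt_top.2 ⟨?_, ?_⟩
  · exact ENNReal.mul_lt_top ENNReal.ofReal_lt_top ENNReal.ofReal_lt_top
  · refine ENNReal.sum_lt_top.2 fun j _ => ?_
    exact ENNReal.mul_lt_top ENNReal.ofReal_lt_top ENNReal.ofReal_lt_top

theorem C_nonneg (i : Fin d) (ω : Ω) (t : ℝ) : 0 ≤ ∫ s in Ioc (0:ℝ) t, H.lam i s ω :=
  integral_nonneg fun s => lam_nonneg H i s ω

theorem ofReal_C_le (hA1 : H.A1) (i : Fin d) (ω : Ω) (b : ℝ) :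
    ENNReal.ofReal (∫ s in Ioc (0:ℝ) b, H.lam i s ω)
      ≤ ENNReal.ofReal (H.μ i) * ENNReal.ofReal b
        + ∑ j, ENNReal.ofReal (H.K i j) * ENNReal.ofReal (H.N j ω b) := by
  refine le_trans ?_ (lintegral_lam_le H hA1 i ω b)
  rw [ofReal_integral_eq_lintegral_ofReal (integrableOn_lam H hA1 i ω b)
    (Eventually.of_forall fun s => lam_nonneg H i s ω)]

theorem M_nonpos_time (i : Fin d) (ω : Ω) (t : ℝ) (ht : t ≤ 0) : H.M i t ω = 0 := by
  rw [HawkesData.M, H.N_zero i ω t ht, Ioc_eq_empty (by exact not_lt.2 ht)]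
  simp

/-- Convergence of the compensator along a sequence of times decreasing to `b`. -/
theorem tendsto_C (hA1 : H.A1) (i : Fin d) (ω : Ω) {b : ℝ} {u : ℕ → ℝ}
    (hu : ∀ q, b ≤ u q) (hub : ∀ q, u q ≤ b + 1) (hlim : Tendsto u atTop (𝓝 b)) :
    Tendsto (fun q => ∫ s in Ioc (0:ℝ) (u q), H.lam i s ω) atTop
      (𝓝 (∫ s in Ioc (0:ℝ) b, H.lam i s ω)) := by
  have hrw : ∀ c : ℝ, c ≤ b + 1 → ∫ s in Ioc (0:ℝ) c, H.lam i s ω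
      = ∫ s in Ioc (0:ℝ) (b+1), (Ioc (0:ℝ) c).indicator (fun s => H.lam i s ω) s := by
    intro c hc
    rw [integral_indicator measurableSet_Ioc, Measure.restrict_restrict measurableSet_Ioc,
      inter_eq_left.2 (Ioc_subset_Ioc le_rfl hc)]
  have hrw2 : ∀ q, ∫ s in Ioc (0:ℝ) (u q), H.lam i s ω
      = ∫ s in Ioc (0:ℝ) (b+1), (Ioc (0:ℝ) (u q)).indicator (fun s => H.lam i s ω) s :=
    fun q => hrw (u q) (hub q)
  simp_rw [hrw2, hrw b (by linarith)]
  refine tendsto_integral_of_dominated_convergence (fun s => H.lam i s ω) ?_ ?_ ?_ ?_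
  · exact fun q => ((measurable_lam_s H i ω).indicator measurableSet_Ioc).aestronglyMeasurable
  · exact integrableOn_lam H hA1 i ω (b+1)
  · intro q
    refine Eventually.of_forall fun s => ?_
    rw [Real.norm_eq_abs]
    by_cases hs : s ∈ Ioc (0:ℝ) (u q)
    · rw [indicator_of_mem hs, abs_of_nonneg (lam_nonneg H i s ω)]
    · rw [indicator_of_notMem hs, abs_zero]
      exact lam_nonneg H i s ω
  · refine Eventually.of_forall fun s => ?_
    by_cases hs : s ≤ b
    · have h1 : ∀ q, (Ioc (0:ℝ) (u q)).indicator (fun s => H.lam i s ω) s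
          = (Ioc (0:ℝ) b).indicator (fun s => H.lam i s ω) s := by
        intro q
        by_cases hs0 : 0 < s
        · rw [indicator_of_mem (mem_Ioc.2 ⟨hs0, le_trans hs (hu q)⟩),
            indicator_of_mem (mem_Ioc.2 ⟨hs0, hs⟩)]
        · rw [indicator_of_notMem (fun hmem => hs0 hmem.1),
            indicator_of_notMem (fun hmem => hs0 hmem.1)]
      simp_rw [h1]
      exact tendsto_const_nhds
    · push_neg at hs
      have h2 : ∀ᶠ q in atTop, (Ioc (0:ℝ) (u q)).indicator (fun s => H.lam i s ω) s = 0 := by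
        filter_upwards [hlim.eventually_lt_const hs] with q hq
        exact indicator_of_notMem (fun hmem => absurd hmem.2 (not_le.2 hq)) _
      rw [indicator_of_notMem (fun hmem => absurd hmem.2 (not_le.2 hs))]
      exact Tendsto.congr' (by filter_upwards [h2] with q hq using hq.symm) tendsto_const_nhds

theorem tendsto_N_right (i : Fin d) (ω : Ω) {b : ℝ} {u : ℕ → ℝ}
    (hu : ∀ q, b ≤ u q) (hlim : Tendsto u atTop (𝓝 b)) :
    Tendsto (fun q => H.N i ω (u q)) atTop (𝓝 (H.N i ω b)) := by
  have hrc := (H.N i ω).right_continuous b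
  exact hrc.tendsto.comp (tendsto_nhdsWithin_of_tendsto_nhds_of_eventually_within _ hlim
    (Eventually.of_forall fun q => hu q))

end Pathwise
end HawkesData


namespace HawkesAux

variable {Ω : Type*} [mΩ : MeasurableSpace Ω]

theorem stopping_measurable_real {F : Filtration ℝ mΩ} {τ : Ω → ℝ}
    (hτ : IsStoppingTime F fun ω => (τ ω : WithTop ℝ)) : Measurable τ := by
  apply measurable_of_Iic
  intro t
  have := F.le t _ (hτ t)
  simp only [WithTop.coe_le_coe] at this
  exact this

/-- The `ε`-grid upper approximation of a random time. -/
def gridCeil (ε : ℝ) (S : Ω → ℝ) (ω : Ω) : ℝ := ε * ⌈S ω / ε⌉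

theorem le_gridCeil {ε : ℝ} (hε : 0 < ε) (S : Ω → ℝ) (ω : Ω) : S ω ≤ gridCeil ε S ω := by
  have h := Int.le_ceil (S ω / ε)
  calc S ω = ε * (S ω / ε) := by field_simp
    _ ≤ ε * ⌈S ω / ε⌉ := mul_le_mul_of_nonneg_left h hε.le

theorem gridCeil_le {ε : ℝ} (hε : 0 < ε) (S : Ω → ℝ) (ω : Ω) : gridCeil ε S ω ≤ S ω + ε := by
  have h := (Int.ceil_lt_add_one (S ω / ε)).le
  calc gridCeil ε S ω = ε * ⌈S ω / ε⌉ := rfl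
    _ ≤ ε * (S ω / ε + 1) := mul_le_mul_of_nonneg_left h hε.le
    _ = S ω + ε := by rw [mul_add, mul_one, mul_div_cancel₀ _ hε.ne']

theorem isStoppingTime_gridCeil {F : Filtration ℝ mΩ} {S : Ω → ℝ} {ε : ℝ} (hε : 0 < ε)
    (hS : IsStoppingTime F fun ω => (S ω : WithTop ℝ)) :
    IsStoppingTime F fun ω => (gridCeil ε S ω : WithTop ℝ) := by
  intro t
  simp only [WithTop.coe_le_coe]
  have key : {ω | gridCeil ε S ω ≤ t} = {ω | S ω ≤ ε * ⌊t / ε⌋} := by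
    ext ω
    simp only [gridCeil, mem_setOf_eq]
    constructor
    · intro h
      have h1 : (⌈S ω / ε⌉ : ℝ) ≤ t / ε := by
        rw [le_div_iff₀ hε]
        linarith [mul_comm (⌈S ω / ε⌉ : ℝ) ε]
      have h3 : S ω / ε ≤ (⌊t / ε⌋ : ℝ) := Int.ceil_le.1 (Int.le_floor.2 h1)
      calc S ω = ε * (S ω / ε) := by field_simp
        _ ≤ ε * ⌊t / ε⌋ := mul_le_mul_of_nonneg_left h3 hε.le
    · intro h
      have h3 : S ω / ε ≤ (⌊t / ε⌋ : ℝ) := by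
        rw [div_le_iff₀ hε]
        linarith [mul_comm ((⌊t / ε⌋ : ℤ) : ℝ) ε]
      have h4 : (⌈S ω / ε⌉ : ℝ) ≤ (⌊t / ε⌋ : ℝ) := by exact_mod_cast Int.ceil_le.2 h3
      calc ε * ⌈S ω / ε⌉ ≤ ε * (t / ε) :=
            mul_le_mul_of_nonneg_left (h4.trans (Int.floor_le _)) hε.le
        _ = t := by field_simp
  have hle : ε * ⌊t / ε⌋ ≤ t := by
    calc ε * ⌊t / ε⌋ ≤ ε * (t / ε) := mul_le_mul_of_nonneg_left (Int.floor_le _) hε.le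
      _ = t := by field_simp
  rw [show {ω | gridCeil ε S ω ≤ t} = {ω | S ω ≤ ε * ⌊t / ε⌋} from key]
  exact F.mono hle _ (by simpa only [WithTop.coe_le_coe] using hS (ε * ⌊t / ε⌋))

theorem gridCeil_countable_range (ε : ℝ) (S : Ω → ℝ) :
    (Set.range (gridCeil ε S)).Countable := by
  refine Countable.mono ?_ (countable_range fun k : ℤ => ε * k)
  rintro x ⟨ω, rfl⟩
  exact ⟨⌈S ω / ε⌉, rfl⟩

theorem measurable_gridCeil' {S : Ω → ℝ} (hS : Measurable S) {ε : ℝ} :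
    Measurable (gridCeil ε S) := by
  have h1 : Measurable fun ω => ((⌈S ω / ε⌉ : ℤ) : ℝ) :=
    measurable_from_top.comp ((hS.div_const ε).ceil)
  exact h1.const_mul ε

theorem tendsto_gridCeil {S : Ω → ℝ} (ω : Ω) :
    Tendsto (fun q : ℕ => gridCeil (1 / (q + 1)) S ω) atTop (𝓝 (S ω)) := by
  have h1 : ∀ q : ℕ, S ω ≤ gridCeil (1 / (q + 1 : ℝ)) S ω := fun q =>
    le_gridCeil (by positivity) S ω
  have h2 : ∀ q : ℕ, gridCeil (1 / (q + 1 : ℝ)) S ω ≤ S ω + 1 / (q + 1) := fun q =>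
    gridCeil_le (by positivity) S ω
  have h3 : Tendsto (fun q : ℕ => S ω + 1 / (q + 1 : ℝ)) atTop (𝓝 (S ω)) := by
    have := tendsto_one_div_add_atTop_nhds_zero_nat (𝕜 := ℝ)
    have h4 := tendsto_const_nhds (x := S ω) (f := atTop (α := ℕ)) |>.add this
    simpa using h4
  exact tendsto_of_tendsto_of_tendsto_of_le_of_le tendsto_const_nhds h3 h1 h2

end HawkesAux

namespace HawkesData

open HawkesAux Function

open scoped ENNReal

variable {d : ℕ} {Ω : Type*} [mΩ : MeasurableSpace Ω]

section Stopped

variable (H : HawkesData d Ω)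

theorem measurable_N_t (i : Fin d) (t : ℝ) : Measurable fun ω => H.N i ω t :=
  (H.adapted i t).mono (H.F.le t) le_rfl

theorem measurable_M_t (hH : H.IsHawkes) (i : Fin d) (t : ℝ) :
    Measurable fun ω => H.M i t ω :=
  (((hH i).1 t).mono (H.F.le t)).measurable

theorem measurable_C_t (hH : H.IsHawkes) (i : Fin d) (t : ℝ) :
    Measurable fun ω => ∫ s in Ioc (0:ℝ) t, H.lam i s ω := by
  have heq : (fun ω => ∫ s in Ioc (0:ℝ) t, H.lam i s ω)
      = fun ω => H.N i ω t - H.M i t ω := by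
    ext ω
    rw [HawkesData.M]
    ring
  rw [heq]
  exact (measurable_N_t H i t).sub (measurable_M_t H hH i t)

theorem measurable_N_stopped (i : Fin d) {σ : Ω → ℝ} (hσm : Measurable σ)
    (hσ0 : ∀ ω, 0 ≤ σ ω) : Measurable fun ω => H.N i ω (σ ω) := by
  have hq : ∀ q : ℕ, Measurable fun ω => H.N i ω (gridCeil (1 / (q + 1 : ℝ)) σ ω) := by
    intro q
    exact measurable_comp_countable_range (fun t => measurable_N_t H i t)
      (measurable_gridCeil' hσm) (gridCeil_countable_range _ σ) (fun ω => mem_range_self ω)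
  refine measurable_of_tendsto_metrizable hq (tendsto_pi_nhds.2 fun ω => ?_)
  exact tendsto_N_right H i ω (fun q => le_gridCeil (by positivity) σ ω) (tendsto_gridCeil ω)

theorem measurable_C_stopped (hH : H.IsHawkes) (hA1 : H.A1) (i : Fin d) {σ : Ω → ℝ}
    (hσm : Measurable σ) (hσ0 : ∀ ω, 0 ≤ σ ω) :
    Measurable fun ω => ∫ s in Ioc (0:ℝ) (σ ω), H.lam i s ω := by
  have hq : ∀ q : ℕ, Measurable fun ω =>
      ∫ s in Ioc (0:ℝ) (gridCeil (1 / (q + 1 : ℝ)) σ ω), H.lam i s ω := by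
    intro q
    exact measurable_comp_countable_range (fun t => measurable_C_t H hH i t)
      (measurable_gridCeil' hσm) (gridCeil_countable_range _ σ) (fun ω => mem_range_self ω)
  refine measurable_of_tendsto_metrizable hq (tendsto_pi_nhds.2 fun ω => ?_)
  refine tendsto_C H hA1 i ω (fun q => le_gridCeil (by positivity) σ ω)
    (fun q => le_trans (gridCeil_le (by positivity) σ ω) ?_) (tendsto_gridCeil ω)
  have : (1 : ℝ) / (q + 1) ≤ 1 := by
    rw [div_le_one (by positivity)]
    linarith
  linarith

end Stopped

section Rho

variable (H : HawkesData d Ω)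

/-- The first time the total number of points reaches `n`, capped at `B`. -/
def rho (n : ℕ) (B : ℝ) (ω : Ω) : ℝ :=
  sInf ({s : ℝ | (n : ℝ) ≤ ∑ i, H.N i ω s} ∪ {B})

theorem rho_bddBelow (n : ℕ) (hn : 1 ≤ n) {B : ℝ} (hB : 0 ≤ B) (ω : Ω) :
    BddBelow ({s : ℝ | (n : ℝ) ≤ ∑ i, H.N i ω s} ∪ {B}) := by
  refine ⟨0, ?_⟩
  rintro x (hx | hx)
  · by_contra hx0
    push_neg at hx0
    have hzero : ∑ i, H.N i ω x = 0 :=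
      Finset.sum_eq_zero fun i _ => H.N_zero i ω x hx0.le
    rw [mem_setOf_eq, hzero] at hx
    have : (1 : ℝ) ≤ (n : ℝ) := by exact_mod_cast hn
    linarith
  · rw [mem_singleton_iff] at hx
    rw [hx]
    exact hB

theorem rho_nonneg (n : ℕ) (hn : 1 ≤ n) {B : ℝ} (hB : 0 ≤ B) (ω : Ω) :
    0 ≤ H.rho n B ω := by
  refine Real.sInf_nonneg ?_
  rintro x (hx | hx)
  · by_contra hx0
    push_neg at hx0
    have hzero : ∑ i, H.N i ω x = 0 :=
      Finset.sum_eq_zero fun i _ => H.N_zero i ω x hx0.le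
    rw [mem_setOf_eq, hzero] at hx
    have : (1 : ℝ) ≤ (n : ℝ) := by exact_mod_cast hn
    linarith
  · rw [mem_singleton_iff] at hx
    rw [hx]
    exact hB

theorem rho_le (n : ℕ) (hn : 1 ≤ n) {B : ℝ} (hB : 0 ≤ B) (ω : Ω) : H.rho n B ω ≤ B :=
  csInf_le (rho_bddBelow H n hn hB ω) (mem_union_right _ rfl)

theorem rho_isStoppingTime (n : ℕ) (hn : 1 ≤ n) {B : ℝ} (hB : 0 ≤ B) :
    IsStoppingTime H.F fun ω => (H.rho n B ω : WithTop ℝ) := by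
  intro t
  simp only [WithTop.coe_le_coe]
  by_cases hBt : B ≤ t
  · have huniv : {ω | H.rho n B ω ≤ t} = univ :=
      eq_univ_of_forall fun ω => le_trans (rho_le H n hn hB ω) hBt
    rw [huniv]
    exact MeasurableSet.univ
  · push_neg at hBt
    have key : {ω | H.rho n B ω ≤ t} = {ω | (n : ℝ) ≤ ∑ i, H.N i ω t} := by
      ext ω
      simp only [mem_setOf_eq]
      constructor
      · intro h
        have hstep : ∀ δ : ℝ, 0 < δ → δ ≤ B - t → (n : ℝ) ≤ ∑ i, H.N i ω (t + δ) := by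
          intro δ hδ hδB
          have hnon : ({s : ℝ | (n : ℝ) ≤ ∑ i, H.N i ω s} ∪ {B}).Nonempty :=
            ⟨B, mem_union_right _ rfl⟩
          have hlt : sInf ({s : ℝ | (n : ℝ) ≤ ∑ i, H.N i ω s} ∪ {B}) < t + δ :=
            lt_of_le_of_lt h (by linarith)
          obtain ⟨x, hx, hxlt⟩ := (csInf_lt_iff (rho_bddBelow H n hn hB ω) hnon).1 hlt
          rcases hx with hxA | hxB
          · exact le_trans hxA (Finset.sum_le_sum fun i _ => (H.N i ω).mono hxlt.le)
          · rw [mem_singleton_iff] at hxB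
            rw [hxB] at hxlt
            linarith
        have hseq : Tendsto (fun k : ℕ => t + (B - t) / (k + 1)) atTop (𝓝 t) := by
          have h0 : Tendsto (fun k : ℕ => (1 : ℝ) / (k + 1)) atTop (𝓝 0) :=
            tendsto_one_div_add_atTop_nhds_zero_nat
          have h1 := h0.const_mul (B - t)
          have h2 := tendsto_const_nhds (x := t) (f := atTop (α := ℕ)) |>.add h1
          simp only [mul_zero, add_zero] at h2
          refine h2.congr fun k => ?_
          rw [mul_one_div]
        have hconv : Tendsto (fun k : ℕ => ∑ i, H.N i ω (t + (B - t) / (k + 1))) atTop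
            (𝓝 (∑ i, H.N i ω t)) := by
          refine tendsto_finset_sum _ fun i _ => ?_
          refine tendsto_N_right H i ω (fun k => ?_) hseq
          have : (0:ℝ) < (B - t) / (k + 1) := div_pos (by linarith) (by positivity)
          linarith
        refine ge_of_tendsto hconv (Eventually.of_forall fun k => ?_)
        refine hstep _ (div_pos (by linarith) (by positivity)) ?_
        rw [div_le_iff₀ (by positivity : (0:ℝ) < (k:ℝ) + 1)]
        nlinarith [Nat.cast_nonneg (α := ℝ) k]
      · intro h
        exact csInf_le (rho_bddBelow H n hn hB ω) (mem_union_left _ h)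
    rw [key]
    refine measurableSet_le measurable_const ?_
    exact Finset.measurable_sum _ fun i _ => (H.adapted i t)

theorem sum_N_rho_le (n : ℕ) (hn : 1 ≤ n) {B : ℝ} (hB : 0 ≤ B) (ω : Ω) :
    ∑ i, H.N i ω (H.rho n B ω) ≤ n := by
  set a := H.rho n B ω with ha
  have hlt : ∀ s, s < a → ∑ i, H.N i ω s ≤ (n : ℝ) - 1 := by
    intro s hs
    have hnotmem : s ∉ ({s : ℝ | (n : ℝ) ≤ ∑ i, H.N i ω s} ∪ {B}) :=
      notMem_of_lt_csInf hs (rho_bddBelow H n hn hB ω)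
    have hns : ∑ i, H.N i ω s < (n : ℝ) := by
      by_contra hcon
      push_neg at hcon
      exact hnotmem (mem_union_left _ hcon)
    have hnat : ∀ i : Fin d, ∃ m : ℕ, H.N i ω s = m := fun i => H.N_nat i ω s
    choose f hf using hnat
    have hsum : ∑ i, H.N i ω s = ((∑ i, f i : ℕ) : ℝ) := by
      push_cast
      exact Finset.sum_congr rfl fun i _ => hf i
    rw [hsum] at hns ⊢
    have hmn : (∑ i, f i) < n := by exact_mod_cast hns
    have h1 : ((∑ i, f i : ℕ) : ℝ) + 1 ≤ (n : ℝ) := by exact_mod_cast hmn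
    linarith
  have hleft : ∑ i, leftLim (H.N i ω) a ≤ (n : ℝ) - 1 := by
    have htt : Tendsto (fun s => ∑ i, H.N i ω s) (𝓝[<] a)
        (𝓝 (∑ i, leftLim (H.N i ω) a)) :=
      tendsto_finset_sum _ fun i _ => (H.N i ω).mono.tendsto_leftLim a
    refine le_of_tendsto htt ?_
    filter_upwards [self_mem_nhdsWithin] with s hs
    exact hlt s hs
  have hdiff_nonneg : ∀ i : Fin d, 0 ≤ H.N i ω a - leftLim (H.N i ω) a := fun i =>
    sub_nonneg.2 ((H.N i ω).mono.leftLim_le le_rfl)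
  have hdiffJ : ∀ i : Fin d, H.N i ω a - leftLim (H.N i ω) a
      = ((H.N i ω).measure {a}).toReal := by
    intro i
    rw [StieltjesFunction.measure_singleton, ENNReal.toReal_ofReal (hdiff_nonneg i)]
  have hjump : ∑ i, (H.N i ω a - leftLim (H.N i ω) a) ≤ 1 := by
    by_cases hex : ∃ i₀, (H.N i₀ ω).measure {a} ≠ 0
    · obtain ⟨i₀, hi₀⟩ := hex
      have hz : ∀ i ∈ Finset.univ, i ≠ i₀ → H.N i ω a - leftLim (H.N i ω) a = 0 := by
        intro i _ hi
        rcases H.no_common_jump i i₀ ω a hi with h | h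
        · rw [hdiffJ i, h, ENNReal.toReal_zero]
        · exact absurd h hi₀
      rw [Finset.sum_eq_single_of_mem i₀ (Finset.mem_univ i₀) hz, hdiffJ i₀]
      have hle1 := H.jump_le_one i₀ ω a
      calc ((H.N i₀ ω).measure {a}).toReal ≤ (1 : ℝ≥0∞).toReal :=
            ENNReal.toReal_mono ENNReal.one_ne_top hle1
        _ = 1 := ENNReal.toReal_one
    · push_neg at hex
      have hz : ∀ i : Fin d, H.N i ω a - leftLim (H.N i ω) a = 0 := fun i => by
        rw [hdiffJ i, hex i, ENNReal.toReal_zero]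
      rw [Finset.sum_congr rfl fun i _ => hz i]
      simp
  have hdecomp : ∑ i, H.N i ω a
      = ∑ i, leftLim (H.N i ω) a + ∑ i, (H.N i ω a - leftLim (H.N i ω) a) := by
    rw [← Finset.sum_add_distrib]
    exact Finset.sum_congr rfl fun i _ => by ring
  rw [hdecomp]
  linarith

theorem rho_eq_B (n : ℕ) (hn : 1 ≤ n) {B : ℝ} (hB : 0 ≤ B) (ω : Ω)
    (hω : ∑ i, H.N i ω B < (n : ℝ)) : H.rho n B ω = B := by
  refine le_antisymm (rho_le H n hn hB ω) ?_
  refine le_csInf ⟨B, mem_union_right _ rfl⟩ ?_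
  rintro x (hx | hx)
  · rw [mem_setOf_eq] at hx
    by_contra hcon
    push_neg at hcon
    have : ∑ i, H.N i ω x ≤ ∑ i, H.N i ω B :=
      Finset.sum_le_sum fun i _ => (H.N i ω).mono hcon.le
    linarith
  · rw [mem_singleton_iff] at hx
    rw [hx]

theorem rho_mono (n : ℕ) (hn : 1 ≤ n) {B : ℝ} (hB : 0 ≤ B) (ω : Ω) :
    H.rho n B ω ≤ H.rho (n + 1) B ω := by
  refine csInf_le_csInf (rho_bddBelow H n hn hB ω) ⟨B, mem_union_right _ rfl⟩ ?_
  refine union_subset_union ?_ Subset.rfl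
  intro s hs
  rw [mem_setOf_eq] at hs ⊢
  refine le_trans ?_ hs
  exact_mod_cast Nat.le_succ n

end Rho

end HawkesData


namespace HawkesData

open HawkesAux Function

open scoped ENNReal

variable {d : ℕ} {Ω : Type*} [mΩ : MeasurableSpace Ω]

section LemmaA

variable (H : HawkesData d Ω)

/-- Key identity: for a bounded stopping time `σ`, the expectation of `N_σ` equals the
expectation of the compensator at `σ` (as an identity in `ℝ≥0∞`). -/
theorem lintegral_N_stopped_eq (hH : H.IsHawkes) (hA1 : H.A1) (i : Fin d)
    {σ : Ω → ℝ} (hσ : IsStoppingTime H.F fun ω => (σ ω : WithTop ℝ)) (hσ0 : ∀ ω, 0 ≤ σ ω) {B : ℝ} (hB : 0 ≤ B)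
    (hσB : ∀ ω, σ ω ≤ B) :
    ∫⁻ ω, ENNReal.ofReal (H.N i ω (σ ω)) ∂H.P
      = ∫⁻ ω, ENNReal.ofReal (∫ s in Ioc (0:ℝ) (σ ω), H.lam i s ω) ∂H.P := by
  haveI := H.isProb
  have hσm : Measurable σ := stopping_measurable_real hσ
  set τ : ℕ → Ω → ℝ := fun q => gridCeil (1 / (q + 1 : ℝ)) σ with hτdef
  have hεpos : ∀ q : ℕ, (0:ℝ) < 1 / (q + 1 : ℝ) := fun q => by positivity
  have hεle : ∀ q : ℕ, (1:ℝ) / (q + 1 : ℝ) ≤ 1 := by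
    intro q
    rw [div_le_one (by positivity)]
    linarith [Nat.cast_nonneg (α := ℝ) q]
  have hτst : ∀ q, IsStoppingTime H.F fun ω => (τ q ω : WithTop ℝ) := fun q => isStoppingTime_gridCeil (hεpos q) hσ
  have hτge : ∀ q ω, σ ω ≤ τ q ω := fun q ω => le_gridCeil (hεpos q) σ ω
  have hτle1 : ∀ q ω, τ q ω ≤ σ ω + 1 := fun q ω =>
    le_trans (gridCeil_le (hεpos q) σ ω) (by linarith [hεle q])
  have hτle : ∀ q ω, τ q ω ≤ B + 1 := fun q ω =>
    le_trans (hτle1 q ω) (by linarith [hσB ω])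
  have hτm : ∀ q, Measurable (τ q) := fun q => measurable_gridCeil' hσm
  have hτtend : ∀ ω, Tendsto (fun q => τ q ω) atTop (𝓝 (σ ω)) := fun ω => tendsto_gridCeil ω
  -- convergence of M along any sequence decreasing to σ
  have hMseq : ∀ (ω : Ω) (u : ℕ → ℝ), (∀ k, σ ω ≤ u k) → (∀ k, u k ≤ σ ω + 1) →
      Tendsto u atTop (𝓝 (σ ω)) →
      Tendsto (fun k => H.M i (u k) ω) atTop (𝓝 (H.M i (σ ω) ω)) := by
    intro ω u hu hub hlim
    have h1 := tendsto_N_right H i ω hu hlim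
    have h2 := tendsto_C H hA1 i ω hu hub hlim
    simpa [HawkesData.M] using h1.sub h2
  have hMtend : ∀ ω, Tendsto (fun q => H.M i (τ q ω) ω) atTop (𝓝 (H.M i (σ ω) ω)) :=
    fun ω => hMseq ω (fun q => τ q ω) (fun q => hτge q ω) (fun q => hτle1 q ω) (hτtend ω)
  have hNσm : Measurable fun ω => H.N i ω (σ ω) := measurable_N_stopped H i hσm hσ0
  have hCσm : Measurable fun ω => ∫ s in Ioc (0:ℝ) (σ ω), H.lam i s ω :=
    measurable_C_stopped H hH hA1 i hσm hσ0
  by_cases hint : Integrable (H.M i (B + 1)) H.P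
  · -- main case : optional sampling and Vitali convergence
    haveI : SigmaFiniteFiltration H.P H.F := ⟨fun t => inferInstance⟩
    have hsv : ∀ q, stoppedValue (H.M i) (fun ω => (τ q ω : WithTop ℝ))
        =ᵐ[H.P] (H.P)[H.M i (B+1) | ((hτst q).measurableSpace)] := fun q =>
      Martingale.stoppedValue_ae_eq_condExp_of_le_const_of_countable_range (hH i) (hτst q)
        (fun ω => WithTop.coe_le_coe.2 (hτle q ω))
        (Set.Countable.mono (by rintro _ ⟨ω, rfl⟩; exact ⟨_, ⟨ω, rfl⟩, rfl⟩)
          ((gridCeil_countable_range _ σ).image fun x : ℝ => (x : WithTop ℝ)))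
    have hEB : ∫ ω, H.M i (B + 1) ω ∂H.P = 0 := by
      have h0 := (hH i).2 0 (B + 1) (by linarith)
      have hM00 : ∀ ω, H.M i 0 ω = 0 := fun ω => M_nonpos_time H i ω 0 le_rfl
      rw [← integral_condExp (H.F.le 0), integral_congr_ae h0,
        integral_congr_ae (Eventually.of_forall fun ω => hM00 ω), integral_zero]
    have hEq : ∀ q, ∫ ω, stoppedValue (H.M i) (fun ω => (τ q ω : WithTop ℝ)) ω ∂H.P = 0 := by
      intro q
      rw [integral_congr_ae (hsv q),
        integral_condExp ((hτst q).measurableSpace_le_of_le fun ω => WithTop.coe_le_coe.2 (hτle q ω))]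
      exact hEB
    have hSVint : ∀ q, Integrable (stoppedValue (H.M i) (fun ω => (τ q ω : WithTop ℝ))) H.P := fun q =>
      integrable_condExp.congr (hsv q).symm
    have hui : UniformIntegrable
        (fun q => (H.P)[H.M i (B+1) | ((hτst q).measurableSpace)]) 1 H.P :=
      hint.uniformIntegrable_condExp fun q => (hτst q).measurableSpace_le_of_le fun ω => WithTop.coe_le_coe.2 (hτle q ω)
    have hunif : UnifIntegrable (fun q => stoppedValue (H.M i) (fun ω => (τ q ω : WithTop ℝ))) 1 H.P :=
      hui.2.1.ae_eq fun q => (hsv q).symm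
    have hSVmeas : ∀ q, Measurable (stoppedValue (H.M i) (fun ω => (τ q ω : WithTop ℝ))) := fun q =>
      measurable_comp_countable_range (fun t => measurable_M_t H hH i t) (hτm q)
        (gridCeil_countable_range _ σ) fun ω => mem_range_self ω
    have hMσmeas : Measurable fun ω => H.M i (σ ω) ω := by
      have heq : (fun ω => H.M i (σ ω) ω)
          = fun ω => H.N i ω (σ ω) - ∫ s in Ioc (0:ℝ) (σ ω), H.lam i s ω := rfl
      rw [heq]
      exact hNσm.sub hCσm
    obtain ⟨Cb, hCb⟩ := hui.2.2
    have hMσint : Integrable (fun ω => H.M i (σ ω) ω) H.P := by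
      refine ⟨hMσmeas.aestronglyMeasurable, ?_⟩
      rw [hasFiniteIntegral_iff_norm]
      have hpt : ∀ ω, ENNReal.ofReal ‖H.M i (σ ω) ω‖
          = liminf (fun q => ENNReal.ofReal ‖stoppedValue (H.M i) (fun ω => (τ q ω : WithTop ℝ)) ω‖) atTop := by
        intro ω
        have ht : Tendsto (fun q => ENNReal.ofReal ‖stoppedValue (H.M i) (fun ω => (τ q ω : WithTop ℝ)) ω‖) atTop
            (𝓝 (ENNReal.ofReal ‖H.M i (σ ω) ω‖)) := by
          refine (ENNReal.continuous_ofReal.tendsto _).comp ?_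
          exact (hMtend ω).norm
        exact ht.liminf_eq.symm
      calc ∫⁻ ω, ENNReal.ofReal ‖H.M i (σ ω) ω‖ ∂H.P
          = ∫⁻ ω, liminf (fun q => ENNReal.ofReal ‖stoppedValue (H.M i) (fun ω => (τ q ω : WithTop ℝ)) ω‖) atTop ∂H.P :=
            lintegral_congr fun ω => hpt ω
        _ ≤ liminf (fun q => ∫⁻ ω, ENNReal.ofReal ‖stoppedValue (H.M i) (fun ω => (τ q ω : WithTop ℝ)) ω‖ ∂H.P) atTop :=
            lintegral_liminf_le fun q => ((hSVmeas q).norm.ennreal_ofReal)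
        _ ≤ (Cb : ℝ≥0∞) := by
            refine liminf_le_of_frequently_le' (Frequently.of_forall fun q => ?_)
            have h1 : ∫⁻ ω, ENNReal.ofReal ‖stoppedValue (H.M i) (fun ω => (τ q ω : WithTop ℝ)) ω‖ ∂H.P
                = eLpNorm (stoppedValue (H.M i) (fun ω => (τ q ω : WithTop ℝ))) 1 H.P := by
              rw [eLpNorm_one_eq_lintegral_enorm]
              refine lintegral_congr fun ω => ?_
              rw [← ofReal_norm]
            rw [h1, eLpNorm_congr_ae (hsv q)]
            exact hCb q
        _ < ⊤ := ENNReal.coe_lt_top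
    have hL1 := tendsto_Lp_finite_of_tendsto_ae (μ := H.P) (p := 1) le_rfl ENNReal.one_ne_top
      (fun q => (hSVint q).aestronglyMeasurable) (memLp_one_iff_integrable.2 hMσint) hunif
      (Eventually.of_forall hMtend)
    have hint0 : ∫ ω, H.M i (σ ω) ω ∂H.P = 0 := by
      have h2 : Tendsto (fun q => ∫ ω, stoppedValue (H.M i) (fun ω => (τ q ω : WithTop ℝ)) ω ∂H.P) atTop
          (𝓝 (∫ ω, H.M i (σ ω) ω ∂H.P)) := by
        refine tendsto_integral_of_L1 _ hMσint.1 (Eventually.of_forall hSVint) ?_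
        have heq : ∀ q, ∫⁻ ω, ‖stoppedValue (H.M i) (fun ω => (τ q ω : WithTop ℝ)) ω - H.M i (σ ω) ω‖ₑ ∂H.P
            = eLpNorm (stoppedValue (H.M i) (fun ω => (τ q ω : WithTop ℝ)) - fun ω => H.M i (σ ω) ω) 1 H.P := by
          intro q
          rw [eLpNorm_one_eq_lintegral_enorm]
          refine lintegral_congr fun ω => ?_
          simp [Pi.sub_apply]
        simp_rw [heq]
        exact hL1
      have h3 : Tendsto (fun q => ∫ ω, stoppedValue (H.M i) (fun ω => (τ q ω : WithTop ℝ)) ω ∂H.P) atTop (𝓝 0) := by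
        refine Tendsto.congr (fun q => (hEq q).symm) ?_
        exact tendsto_const_nhds
      exact tendsto_nhds_unique h2 h3
    refine lintegral_ofReal_eq_of_sub_integrable H.P (fun ω => N_nonneg H i ω _)
      (fun ω => C_nonneg H i ω _) hNσm hCσm ?_ ?_
    · exact hMσint
    · exact hint0
  · -- degenerate case : all the martingale values vanish a.e.
    have hzero : ∀ t : ℝ, t ≤ B + 1 → H.M i t =ᵐ[H.P] 0 := by
      intro t ht
      have h1 := (hH i).2 t (B + 1) ht
      rw [condExp_of_not_integrable hint] at h1
      exact h1.symm
    have hQ : ∀ᵐ ω ∂H.P, ∀ q : ℚ, (q:ℝ) ≤ B + 1 → H.M i q ω = 0 := by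
      rw [ae_all_iff]
      intro q
      by_cases hq : (q:ℝ) ≤ B + 1
      · filter_upwards [hzero q hq] with ω hω _
        exact hω
      · filter_upwards with ω hq'
        exact absurd hq' hq
    refine lintegral_congr_ae ?_
    filter_upwards [hQ] with ω hω
    have hex : ∀ k : ℕ, ∃ q : ℚ, σ ω < (q:ℝ) ∧ (q:ℝ) < σ ω + 1/(k+1) := by
      intro k
      have h : σ ω < σ ω + 1/(k+1 : ℝ) := by
        have : (0:ℝ) < 1/(k+1) := by positivity
        linarith
      exact exists_rat_btwn h
    choose qs hqs1 hqs2 using hex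
    have hqle : ∀ k : ℕ, ((qs k : ℚ) : ℝ) ≤ B + 1 := by
      intro k
      have h1 := hqs2 k
      have h2 : (1:ℝ)/(k+1) ≤ 1 := by
        rw [div_le_one (by positivity)]
        linarith [Nat.cast_nonneg (α := ℝ) k]
      linarith [hσB ω]
    have htendq : Tendsto (fun k : ℕ => ((qs k : ℚ) : ℝ)) atTop (𝓝 (σ ω)) := by
      have hup : Tendsto (fun k : ℕ => σ ω + 1/(k+1 : ℝ)) atTop (𝓝 (σ ω)) := by
        have h0 : Tendsto (fun k : ℕ => (1:ℝ)/(k+1)) atTop (𝓝 0) :=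
          tendsto_one_div_add_atTop_nhds_zero_nat
        simpa using (tendsto_const_nhds (x := σ ω) (f := atTop (α := ℕ))).add h0
      exact tendsto_of_tendsto_of_tendsto_of_le_of_le tendsto_const_nhds hup
        (fun k => (hqs1 k).le) (fun k => (hqs2 k).le)
    have hM : Tendsto (fun k => H.M i (qs k) ω) atTop (𝓝 (H.M i (σ ω) ω)) := by
      refine hMseq ω (fun k => (qs k : ℝ)) (fun k => (hqs1 k).le) (fun k => ?_) htendq
      have h2 : (1:ℝ)/(k+1) ≤ 1 := by
        rw [div_le_one (by positivity)]
        linarith [Nat.cast_nonneg (α := ℝ) k]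
      linarith [hqs2 k]
    have hM0 : H.M i (σ ω) ω = 0 := by
      have hconst : ∀ k, H.M i (qs k) ω = 0 := fun k => hω (qs k) (hqle k)
      have := (tendsto_congr hconst).1 hM
      exact tendsto_nhds_unique this tendsto_const_nhds
    have hNC : H.N i ω (σ ω) = ∫ s in Ioc (0:ℝ) (σ ω), H.lam i s ω := by
      have hM' := hM0
      rw [HawkesData.M] at hM'
      linarith
    rw [hNC]

end LemmaA

end HawkesData


namespace HawkesData

open HawkesAux Function

open scoped ENNReal

variable {d : ℕ} {Ω : Type*} [mΩ : MeasurableSpace Ω]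

/-- Main estimate for the grid-rounded stopping time, with an `ε` of room. -/
theorem step1 (H : HawkesData d Ω) (hH : H.IsHawkes) (hA1 : H.A1) (i : Fin d)
    {S : Ω → ℝ} (hS : IsStoppingTime H.F fun ω => (S ω : WithTop ℝ)) (hS0 : ∀ ω, 0 ≤ S ω)
    (hES : (∫⁻ ω, ENNReal.ofReal (S ω) ∂H.P) ≠ ⊤) {ε : ℝ} (hε : 0 < ε) :
    ∫⁻ ω, ENNReal.ofReal (H.N i ω (S ω)) ∂H.P
      ≤ ENNReal.ofReal (H.Gam.mulVec H.μ i)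
        * ((∫⁻ ω, ENNReal.ofReal (S ω) ∂H.P) + ENNReal.ofReal ε) := by
  haveI := H.isProb
  set T : Ω → ℝ := gridCeil ε S with hTdef
  have hT : IsStoppingTime H.F fun ω => (T ω : WithTop ℝ) := isStoppingTime_gridCeil hε hS
  have hTm : Measurable T := stopping_measurable_real hT
  have hST : ∀ ω, S ω ≤ T ω := fun ω => le_gridCeil hε S ω
  have hT0 : ∀ ω, 0 ≤ T ω := fun ω => le_trans (hS0 ω) (hST ω)
  have hTS : ∀ ω, T ω ≤ S ω + ε := fun ω => gridCeil_le hε S ω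
  have hETle : (∫⁻ ω, ENNReal.ofReal (T ω) ∂H.P)
      ≤ (∫⁻ ω, ENNReal.ofReal (S ω) ∂H.P) + ENNReal.ofReal ε := by
    calc (∫⁻ ω, ENNReal.ofReal (T ω) ∂H.P)
        ≤ ∫⁻ ω, (ENNReal.ofReal (S ω) + ENNReal.ofReal ε) ∂H.P := by
          refine lintegral_mono fun ω => ?_
          rw [← ENNReal.ofReal_add (hS0 ω) hε.le]
          exact ENNReal.ofReal_le_ofReal (hTS ω)
      _ = (∫⁻ ω, ENNReal.ofReal (S ω) ∂H.P) + ENNReal.ofReal ε := by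
          rw [lintegral_add_right _ measurable_const, lintegral_const, measure_univ, mul_one]
  have hETne : (∫⁻ ω, ENNReal.ofReal (T ω) ∂H.P) ≠ ⊤ := by
    refine ne_top_of_le_ne_top ?_ hETle
    exact ENNReal.add_ne_top.2 ⟨hES, ENNReal.ofReal_ne_top⟩
  have hgnonneg : 0 ≤ H.Gam.mulVec H.μ i := by
    unfold HawkesData.Gam Matrix.mulVec dotProduct
    exact Finset.sum_nonneg fun k _ =>
      mul_nonneg (inv_one_sub_entry_nonneg H.K (K_nonneg H) hA1.2 i k) (H.μ_nonneg k)
  -- the crucial uniform bound at the doubly-truncated stopping times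
  have key : ∀ m n : ℕ,
      ∫⁻ ω, ENNReal.ofReal (H.N i ω (min (min (T ω) (ε * m)) (H.rho (n+1) (ε * m) ω))) ∂H.P
        ≤ ENNReal.ofReal (H.Gam.mulVec H.μ i)
          * ((∫⁻ ω, ENNReal.ofReal (S ω) ∂H.P) + ENNReal.ofReal ε) := by
    intro m n
    have hBnn : (0:ℝ) ≤ ε * m := mul_nonneg hε.le (Nat.cast_nonneg m)
    have hn1 : 1 ≤ n + 1 := Nat.succ_le_succ (Nat.zero_le n)
    set σ : Ω → ℝ := fun ω => min (min (T ω) (ε * m)) (H.rho (n+1) (ε * m) ω) with hσdef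
    have hσst : IsStoppingTime H.F fun ω => (σ ω : WithTop ℝ) := by
      simpa only [hσdef, WithTop.coe_min] using
        (hT.min_const (ε * m)).min (rho_isStoppingTime H (n+1) hn1 hBnn)
    have hσ0 : ∀ ω, 0 ≤ σ ω := fun ω =>
      le_min (le_min (hT0 ω) hBnn) (rho_nonneg H (n+1) hn1 hBnn ω)
    have hσB : ∀ ω, σ ω ≤ ε * m := fun ω => le_trans (min_le_left _ _) (min_le_right _ _)
    have hσT : ∀ ω, σ ω ≤ T ω := fun ω => le_trans (min_le_left _ _) (min_le_left _ _)
    have hσρ : ∀ ω, σ ω ≤ H.rho (n+1) (ε * m) ω := fun ω => min_le_right _ _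
    have hσm : Measurable σ := stopping_measurable_real hσst
    -- componentwise expectations
    set x : Fin d → ℝ≥0∞ := fun j => ∫⁻ ω, ENNReal.ofReal (H.N j ω (σ ω)) ∂H.P with hxdef
    have hxle : ∀ j, x j ≤ ENNReal.ofReal ((n:ℝ) + 2) := by
      intro j
      have hpath : ∀ ω, H.N j ω (σ ω) ≤ (n:ℝ) + 2 := by
        intro ω
        have h1 : H.N j ω (σ ω) ≤ ∑ k, H.N k ω (σ ω) :=
          Finset.single_le_sum (f := fun k => H.N k ω (σ ω))
            (fun k _ => N_nonneg H k ω _) (Finset.mem_univ j)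
        have h2 : ∑ k, H.N k ω (σ ω) ≤ ∑ k, H.N k ω (H.rho (n+1) (ε * m) ω) :=
          Finset.sum_le_sum fun k _ => (H.N k ω).mono (hσρ ω)
        have h3 := sum_N_rho_le H (n+1) hn1 hBnn ω
        have h4 : ((n+1 : ℕ) : ℝ) ≤ (n:ℝ) + 2 := by push_cast; linarith
        linarith
      calc x j ≤ ∫⁻ _, ENNReal.ofReal ((n:ℝ) + 2) ∂H.P :=
            lintegral_mono fun ω => ENNReal.ofReal_le_ofReal (hpath ω)
        _ = ENNReal.ofReal ((n:ℝ) + 2) := by rw [lintegral_const, measure_univ, mul_one]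
    have hxne : ∀ j, x j ≠ ⊤ := fun j => ne_top_of_le_ne_top ENNReal.ofReal_ne_top (hxle j)
    have hNm : ∀ j, Measurable fun ω => H.N j ω (σ ω) := fun j =>
      measurable_N_stopped H j hσm hσ0
    -- the renewal inequality in ℝ≥0∞
    have hineq : ∀ j, x j ≤ ENNReal.ofReal (H.μ j) * (∫⁻ ω, ENNReal.ofReal (T ω) ∂H.P)
        + ∑ k, ENNReal.ofReal (H.K j k) * x k := by
      intro j
      have hLA := lintegral_N_stopped_eq H hH hA1 j hσst hσ0 hBnn hσB
      calc x j
          = ∫⁻ ω, ENNReal.ofReal (∫ s in Ioc (0:ℝ) (σ ω), H.lam j s ω) ∂H.P := hLA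
        _ ≤ ∫⁻ ω, (ENNReal.ofReal (H.μ j) * ENNReal.ofReal (T ω)
              + ∑ k, ENNReal.ofReal (H.K j k) * ENNReal.ofReal (H.N k ω (σ ω))) ∂H.P := by
            refine lintegral_mono fun ω => ?_
            refine le_trans (ofReal_C_le H hA1 j ω (σ ω)) ?_
            refine add_le_add (mul_le_mul_right (ENNReal.ofReal_le_ofReal (hσT ω)) _) ?_
            exact le_rfl
        _ = ENNReal.ofReal (H.μ j) * (∫⁻ ω, ENNReal.ofReal (T ω) ∂H.P)
              + ∑ k, ENNReal.ofReal (H.K j k) * x k := by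
            rw [lintegral_add_left (hTm.ennreal_ofReal.const_mul _)]
            rw [lintegral_const_mul _ hTm.ennreal_ofReal]
            congr 1
            rw [lintegral_finset_sum _ fun k _ =>
              (hNm k).ennreal_ofReal.const_mul _]
            exact Finset.sum_congr rfl fun k _ =>
              lintegral_const_mul _ (hNm k).ennreal_ofReal
    -- pass to real vectors
    set e : ℝ := (∫⁻ ω, ENNReal.ofReal (T ω) ∂H.P).toReal with hedef
    set xr : Fin d → ℝ := fun j => (x j).toReal with hxrdef
    have hrhsne : ∀ j, ENNReal.ofReal (H.μ j) * (∫⁻ ω, ENNReal.ofReal (T ω) ∂H.P)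
        + ∑ k, ENNReal.ofReal (H.K j k) * x k ≠ ⊤ := by
      intro j
      refine ENNReal.add_ne_top.2 ⟨ENNReal.mul_ne_top ENNReal.ofReal_ne_top hETne, ?_⟩
      refine (ENNReal.sum_lt_top.2 fun k _ => ?_).ne
      exact ENNReal.mul_lt_top ENNReal.ofReal_lt_top ((hxle k).trans_lt ENNReal.ofReal_lt_top)
    have hxr : ∀ j, xr j ≤ H.μ j * e + (H.K.mulVec xr) j := by
      intro j
      have h1 := ENNReal.toReal_mono (hrhsne j) (hineq j)
      rw [ENNReal.toReal_add (ENNReal.mul_ne_top ENNReal.ofReal_ne_top hETne)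
        ((ENNReal.sum_lt_top.2 fun k _ => ENNReal.mul_lt_top ENNReal.ofReal_lt_top
          ((hxle k).trans_lt ENNReal.ofReal_lt_top)).ne)] at h1
      rw [ENNReal.toReal_mul, ENNReal.toReal_ofReal (H.μ_nonneg j)] at h1
      rw [ENNReal.toReal_sum fun k _ =>
        (ENNReal.mul_lt_top ENNReal.ofReal_lt_top
          ((hxle k).trans_lt ENNReal.ofReal_lt_top)).ne] at h1
      refine le_trans h1 ?_
      unfold Matrix.mulVec dotProduct
      refine add_le_add le_rfl (le_of_eq (Finset.sum_congr rfl fun k _ => ?_))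
      rw [ENNReal.toReal_mul, ENNReal.toReal_ofReal (K_nonneg H j k)]
    have hfinal := le_inv_one_sub_mulVec H.K (K_nonneg H) hA1.2
      (x := xr) (a := fun k => H.μ k * e) hxr i
    have hgam : (1 - H.K)⁻¹.mulVec (fun k => H.μ k * e) i = (H.Gam.mulVec H.μ i) * e := by
      unfold HawkesData.Gam Matrix.mulVec dotProduct
      rw [Finset.sum_mul]
      exact Finset.sum_congr rfl fun k _ => by ring
    have hxi : x i = ENNReal.ofReal (xr i) := (ENNReal.ofReal_toReal (hxne i)).symm
    calc x i = ENNReal.ofReal (xr i) := hxi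
      _ ≤ ENNReal.ofReal ((H.Gam.mulVec H.μ i) * e) :=
          ENNReal.ofReal_le_ofReal (le_trans hfinal (le_of_eq hgam))
      _ = ENNReal.ofReal (H.Gam.mulVec H.μ i) * ENNReal.ofReal e :=
          ENNReal.ofReal_mul hgnonneg
      _ = ENNReal.ofReal (H.Gam.mulVec H.μ i) * (∫⁻ ω, ENNReal.ofReal (T ω) ∂H.P) := by
          rw [hedef, ENNReal.ofReal_toReal hETne]
      _ ≤ ENNReal.ofReal (H.Gam.mulVec H.μ i)
            * ((∫⁻ ω, ENNReal.ofReal (S ω) ∂H.P) + ENNReal.ofReal ε) :=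
          mul_le_mul_right hETle _
  -- let n → ∞ (for fixed m), then m → ∞
  have key2 : ∀ m : ℕ,
      ∫⁻ ω, ENNReal.ofReal (H.N i ω (min (T ω) (ε * m))) ∂H.P
        ≤ ENNReal.ofReal (H.Gam.mulVec H.μ i)
          * ((∫⁻ ω, ENNReal.ofReal (S ω) ∂H.P) + ENNReal.ofReal ε) := by
    intro m
    have hBnn : (0:ℝ) ≤ ε * m := mul_nonneg hε.le (Nat.cast_nonneg m)
    have htend : Tendsto
        (fun n => ∫⁻ ω, ENNReal.ofReal
          (H.N i ω (min (min (T ω) (ε * m)) (H.rho (n+1) (ε * m) ω))) ∂H.P) atTop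
        (𝓝 (∫⁻ ω, ENNReal.ofReal (H.N i ω (min (T ω) (ε * m))) ∂H.P)) := by
      refine lintegral_tendsto_of_tendsto_of_monotone ?_ ?_ ?_
      · intro n
        have hn1 : 1 ≤ n + 1 := Nat.succ_le_succ (Nat.zero_le n)
        have hσm : Measurable fun ω => min (min (T ω) (ε * m)) (H.rho (n+1) (ε * m) ω) :=
          stopping_measurable_real (by simpa only [WithTop.coe_min] using (hT.min_const (ε * m)).min (rho_isStoppingTime H (n+1) hn1 hBnn))
        exact (measurable_N_stopped H i hσm fun ω =>
          le_min (le_min (hT0 ω) hBnn) (rho_nonneg H (n+1) hn1 hBnn ω)).ennreal_ofReal.aemeasurable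
      · refine Eventually.of_forall fun ω => ?_
        refine monotone_nat_of_le_succ fun n => ?_
        refine ENNReal.ofReal_le_ofReal ((H.N i ω).mono ?_)
        refine min_le_min le_rfl ?_
        exact rho_mono H (n+1) (Nat.succ_le_succ (Nat.zero_le n)) hBnn ω
      · refine Eventually.of_forall fun ω => ?_
        obtain ⟨n₀, hn₀⟩ := exists_nat_gt (∑ k, H.N k ω (ε * m))
        have hev : ∀ᶠ n : ℕ in atTop, ENNReal.ofReal
            (H.N i ω (min (min (T ω) (ε * m)) (H.rho (n+1) (ε * m) ω)))
            = ENNReal.ofReal (H.N i ω (min (T ω) (ε * m))) := by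
          filter_upwards [eventually_ge_atTop n₀] with n hn
          have hlt : ∑ k, H.N k ω (ε * m) < ((n+1 : ℕ) : ℝ) := by
            have h1 : (n₀ : ℝ) ≤ ((n+1 : ℕ) : ℝ) := by exact_mod_cast Nat.le_succ_of_le hn
            linarith
          rw [rho_eq_B H (n+1) (Nat.succ_le_succ (Nat.zero_le n)) hBnn ω hlt]
          rw [min_eq_left (min_le_right _ _)]
        exact Tendsto.congr' (EventuallyEq.symm hev) tendsto_const_nhds
    exact le_of_tendsto htend (Eventually.of_forall fun n => key m n)
  have key3 : ∫⁻ ω, ENNReal.ofReal (H.N i ω (T ω)) ∂H.P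
      ≤ ENNReal.ofReal (H.Gam.mulVec H.μ i)
        * ((∫⁻ ω, ENNReal.ofReal (S ω) ∂H.P) + ENNReal.ofReal ε) := by
    have htend : Tendsto
        (fun m : ℕ => ∫⁻ ω, ENNReal.ofReal (H.N i ω (min (T ω) (ε * m))) ∂H.P) atTop
        (𝓝 (∫⁻ ω, ENNReal.ofReal (H.N i ω (T ω)) ∂H.P)) := by
      refine lintegral_tendsto_of_tendsto_of_monotone ?_ ?_ ?_
      · intro m
        have hBnn : (0:ℝ) ≤ ε * m := mul_nonneg hε.le (Nat.cast_nonneg m)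
        have hσm : Measurable fun ω => min (T ω) (ε * m) :=
          stopping_measurable_real (by simpa only [WithTop.coe_min] using hT.min_const (ε * m))
        exact (measurable_N_stopped H i hσm fun ω =>
          le_min (hT0 ω) hBnn).ennreal_ofReal.aemeasurable
      · refine Eventually.of_forall fun ω => ?_
        refine monotone_nat_of_le_succ fun m => ?_
        refine ENNReal.ofReal_le_ofReal ((H.N i ω).mono ?_)
        refine min_le_min le_rfl ?_
        have : (m : ℝ) ≤ (m : ℝ) + 1 := by linarith
        calc ε * m ≤ ε * ((m:ℝ) + 1) := by nlinarith
          _ = ε * ((m + 1 : ℕ) : ℝ) := by push_cast; ring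
      · refine Eventually.of_forall fun ω => ?_
        obtain ⟨m₀, hm₀⟩ := exists_nat_ge (T ω / ε)
        have hev : ∀ᶠ m : ℕ in atTop, ENNReal.ofReal (H.N i ω (min (T ω) (ε * m)))
            = ENNReal.ofReal (H.N i ω (T ω)) := by
          filter_upwards [eventually_ge_atTop m₀] with m hm
          have h1 : T ω ≤ ε * m := by
            rw [← div_le_iff₀' hε]
            exact le_trans hm₀ (by exact_mod_cast hm)
          rw [min_eq_left h1]
        exact Tendsto.congr' (EventuallyEq.symm hev) tendsto_const_nhds
    exact le_of_tendsto htend (Eventually.of_forall fun m => key2 m)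
  refine le_trans ?_ key3
  refine lintegral_mono fun ω => ?_
  exact ENNReal.ofReal_le_ofReal ((H.N i ω).mono (hST ω))

/-- The main bound, assuming `E S` is finite. -/
theorem main_bound (H : HawkesData d Ω) (hH : H.IsHawkes) (hA1 : H.A1) (i : Fin d)
    {S : Ω → ℝ} (hS : IsStoppingTime H.F fun ω => (S ω : WithTop ℝ)) (hS0 : ∀ ω, 0 ≤ S ω)
    (hES : (∫⁻ ω, ENNReal.ofReal (S ω) ∂H.P) ≠ ⊤) :
    ∫⁻ ω, ENNReal.ofReal (H.N i ω (S ω)) ∂H.P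
      ≤ ENNReal.ofReal (H.Gam.mulVec H.μ i) * ∫⁻ ω, ENNReal.ofReal (S ω) ∂H.P := by
  have hk : ∀ k : ℕ, ∫⁻ ω, ENNReal.ofReal (H.N i ω (S ω)) ∂H.P
      ≤ ENNReal.ofReal (H.Gam.mulVec H.μ i)
        * ((∫⁻ ω, ENNReal.ofReal (S ω) ∂H.P) + ENNReal.ofReal (1/(k+1))) := by
    intro k
    exact step1 H hH hA1 i hS hS0 hES (by positivity)
  have htend : Tendsto (fun k : ℕ => ENNReal.ofReal (H.Gam.mulVec H.μ i)
      * ((∫⁻ ω, ENNReal.ofReal (S ω) ∂H.P) + ENNReal.ofReal (1/(k+1)))) atTop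
      (𝓝 (ENNReal.ofReal (H.Gam.mulVec H.μ i) * ((∫⁻ ω, ENNReal.ofReal (S ω) ∂H.P) + 0))) := by
    refine ENNReal.Tendsto.const_mul ?_ (Or.inr ENNReal.ofReal_ne_top)
    refine Tendsto.add tendsto_const_nhds ?_
    have h0 : Tendsto (fun k : ℕ => (1:ℝ)/(k+1)) atTop (𝓝 0) :=
      tendsto_one_div_add_atTop_nhds_zero_nat
    have := (ENNReal.continuous_ofReal.tendsto 0).comp h0
    rw [ENNReal.ofReal_zero] at this
    exact this
  rw [add_zero] at htend
  exact ge_of_tendsto htend (Eventually.of_forall hk)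

end HawkesData


/-- Under (A1), for every finite stopping time `S` (here `S` is real-valued and
nonnegative), `E(N_S) ≤ (Id−K)⁻¹ μ · E(S)` componentwise. -/
theorem hawkes_stopping_time_bound {d : ℕ} {Ω : Type*} [mΩ : MeasurableSpace Ω]
    (H : HawkesData d Ω) (hH : H.IsHawkes) (hA1 : H.A1)
    (S : Ω → ℝ) (hS : IsStoppingTime H.F fun ω => (S ω : WithTop ℝ)) (hS0 : ∀ ω, 0 ≤ S ω) :
    ∀ i, ∫⁻ ω, ENNReal.ofReal (H.N i ω (S ω)) ∂H.P
      ≤ ENNReal.ofReal (H.Gam.mulVec H.μ i) * ∫⁻ ω, ENNReal.ofReal (S ω) ∂H.P := by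
  haveI := H.isProb
  intro i
  by_cases hES : (∫⁻ ω, ENNReal.ofReal (S ω) ∂H.P) = ⊤
  · by_cases hg : H.Gam.mulVec H.μ i = 0
    · have hzt : ∀ t : ℕ, ∀ᵐ ω ∂H.P, H.N i ω t = 0 := by
        intro t
        have hfin : (∫⁻ _ω, ENNReal.ofReal ((t : ℝ)) ∂H.P) ≠ ⊤ := by
          rw [lintegral_const, measure_univ, mul_one]
          exact ENNReal.ofReal_ne_top
        have hb := H.main_bound hH hA1 i (S := fun _ => (t:ℝ))
          (isStoppingTime_const H.F (t:ℝ)) (fun _ω => Nat.cast_nonneg t) hfin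
        rw [hg] at hb
        simp only [ENNReal.ofReal_zero, zero_mul, nonpos_iff_eq_zero] at hb
        have hmeas : Measurable fun ω => ENNReal.ofReal (H.N i ω t) :=
          (HawkesData.measurable_N_t H i t).ennreal_ofReal
        have h0 := (lintegral_eq_zero_iff hmeas).1 hb
        filter_upwards [h0] with ω hω
        have h1 : ENNReal.ofReal (H.N i ω t) = 0 := hω
        rw [ENNReal.ofReal_eq_zero] at h1
        have h2 := HawkesData.N_nonneg H i ω t
        linarith
      have hae : ∀ᵐ ω ∂H.P, H.N i ω (S ω) = 0 := by
        filter_upwards [ae_all_iff.2 hzt] with ω hω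
        have h1 : H.N i ω (S ω) ≤ H.N i ω ((⌈S ω⌉₊ : ℕ) : ℝ) :=
          (H.N i ω).mono (Nat.le_ceil _)
        have h2 := hω ⌈S ω⌉₊
        have h3 := HawkesData.N_nonneg H i ω (S ω)
        linarith
      have hLHS : ∫⁻ ω, ENNReal.ofReal (H.N i ω (S ω)) ∂H.P = 0 := by
        rw [lintegral_congr_ae (hae.mono fun ω hω => by rw [hω, ENNReal.ofReal_zero])]
        simp
      rw [hLHS]
      exact zero_le
    · rw [hES, ENNReal.mul_top ?_]
      · exact le_top
      · refine (ENNReal.ofReal_pos.2 ?_).ne'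
        have hnn : 0 ≤ H.Gam.mulVec H.μ i := by
          unfold HawkesData.Gam Matrix.mulVec dotProduct
          exact Finset.sum_nonneg fun k _ => mul_nonneg
            (HawkesAux.inv_one_sub_entry_nonneg H.K (HawkesData.K_nonneg H) hA1.2 i k)
            (H.μ_nonneg k)
        exact lt_of_le_of_ne hnn (Ne.symm hg)
  · exact H.main_bound hH hA1 i hS hS0 hES
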